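/- Let N ≥ 2, let x_i, x_i' ∈ ℝ^n for i ∈ Fin N, and define L : Matrix (Fin m) (Fin n) ℝ → ℝ as the InfoNCE loss of the embeddings z_i(W) := W *ᵥ x_i and z_i'(W) := W *ᵥ x_i': L(W) = −Σ_i log( exp(−‖z_i−z_i'‖²/2) / Z_i ), Z_i = Σ_{j≠i} exp(−‖z_i−z_j‖²/2) + exp(−‖z_i−z_i'‖²/2). Then L is differentiable, and its gradient with respect to the Frobenius inner product satisfies ∇L(W) = −W * ( Σ̂₀(W) − Σ̂₁(W) ), where, with α_{ij}(W) := exp(−‖z_i−z_j‖²/2)/Z_i for j ≠ i and α_{ii}(W) := exp(−‖z_i−z_i'‖²/2)/Z_i, Σ̂₀(W) := Σ_i Σ_{j≠i} α_{ji}(W)(x_i − x_j)(x_i − x_j)ᵀ and Σ̂₁(W) := Σ_i (1 − α_{ii}(W))(x_i' − x_i)(x_i' − x_i)ᵀ. In particular, the gradient flow Ẇ = −∇L(W) takes the form Ẇ = W X(W) with X(W) = Σ̂₀(W) − Σ̂₁(W) a difference of two positive semidefinite matrices. -/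

import Mathlib

open Matrix Finset

attribute [local instance] Matrix.frobeniusNormedAddCommGroup Matrix.frobeniusNormedSpace

section InfoNCEAux

open Matrix Finset

variable {m n N : ℕ}

private lemma trace_vecMulVec' (W H : Matrix (Fin m) (Fin n) ℝ) (u : Fin n → ℝ) :
    Matrix.trace ((W * Matrix.vecMulVec u u)ᵀ * H) = ∑ a, (W *ᵥ u) a * (H *ᵥ u) a := by
  simp [Matrix.trace, Matrix.diag, Matrix.mul_apply, Matrix.transpose_apply,
    Matrix.vecMulVec_apply, Matrix.mulVec, dotProduct, Finset.sum_mul, Finset.mul_sum]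
  rw [Finset.sum_comm]
  refine Finset.sum_congr rfl fun a _ => Finset.sum_congr rfl fun b _ =>
    Finset.sum_congr rfl fun c _ => by ring

private noncomputable def ev (u : Fin n → ℝ) (a : Fin m) : Matrix (Fin m) (Fin n) ℝ →L[ℝ] ℝ :=
  LinearMap.toContinuousLinearMap
  { toFun := fun W => (W *ᵥ u) a
    map_add' := by intros; simp [Matrix.add_mulVec]
    map_smul' := by intros; simp [Matrix.smul_mulVec] }

private lemma ev_apply (u : Fin n → ℝ) (a : Fin m) (W : Matrix (Fin m) (Fin n) ℝ) :
    ev u a W = (W *ᵥ u) a := rfl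

private noncomputable def dq (u : Fin n → ℝ) (W : Matrix (Fin m) (Fin n) ℝ) :
    Matrix (Fin m) (Fin n) ℝ →L[ℝ] ℝ :=
  ∑ a, (2 * (W *ᵥ u) a) • ev u a

private lemma dq_apply (u : Fin n → ℝ) (W H : Matrix (Fin m) (Fin n) ℝ) :
    dq u W H = 2 * ∑ a, (W *ᵥ u) a * (H *ᵥ u) a := by
  simp [dq, ev_apply, Finset.mul_sum, mul_assoc]

private lemma hasFDerivAt_q (u : Fin n → ℝ) (W : Matrix (Fin m) (Fin n) ℝ) :
    HasFDerivAt (fun V : Matrix (Fin m) (Fin n) ℝ => ∑ a, ((V *ᵥ u) a) ^ 2) (dq u W) W := by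
  have h : ∀ a : Fin m, HasFDerivAt (fun V : Matrix (Fin m) (Fin n) ℝ => ((V *ᵥ u) a) ^ 2)
      ((2 * (W *ᵥ u) a) • ev u a) W := by
    intro a
    have h1 := (ev u a).hasFDerivAt (x := W)
    have h2 := h1.mul h1
    have : (fun V : Matrix (Fin m) (Fin n) ℝ => ((V *ᵥ u) a) ^ 2)
        = fun V => ev u a V * ev u a V := by
      funext V; rw [ev_apply]; ring
    rw [this]
    refine h2.congr_fderiv ?_
    rw [ev_apply, two_mul, add_smul]
    rfl
  exact HasFDerivAt.fun_sum (fun a _ => h a)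

private noncomputable def Ee (u : Fin n → ℝ) (W : Matrix (Fin m) (Fin n) ℝ) : ℝ :=
  Real.exp ((-1/2 : ℝ) * ∑ a, ((W *ᵥ u) a) ^ 2)

private noncomputable def Zf (x x' : Fin N → Fin n → ℝ) (i : Fin N)
    (W : Matrix (Fin m) (Fin n) ℝ) : ℝ :=
  (∑ j ∈ univ.erase i, Ee (x i - x j) W) + Ee (x i - x' i) W

private lemma Zf_pos (x x' : Fin N → Fin n → ℝ) (i : Fin N) (W : Matrix (Fin m) (Fin n) ℝ) :
    0 < Zf x x' i W :=
  add_pos_of_nonneg_of_pos (Finset.sum_nonneg fun _ _ => (Real.exp_pos _).le) (Real.exp_pos _)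

private noncomputable def Dmap (x x' : Fin N → Fin n → ℝ) (W : Matrix (Fin m) (Fin n) ℝ) :
    Matrix (Fin m) (Fin n) ℝ →L[ℝ] ℝ :=
  ∑ i, ((1/2 : ℝ) • dq (x i - x' i) W +
    (Zf x x' i W)⁻¹ •
      ((∑ j ∈ univ.erase i, Ee (x i - x j) W • ((-1/2 : ℝ) • dq (x i - x j) W)) +
        Ee (x i - x' i) W • ((-1/2 : ℝ) • dq (x i - x' i) W)))

private lemma hasFDerivAt_Ee (u : Fin n → ℝ) (W : Matrix (Fin m) (Fin n) ℝ) :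
    HasFDerivAt (fun V => Ee u V) (Ee u W • ((-1/2 : ℝ) • dq u W)) W :=
  ((hasFDerivAt_q u W).const_mul ((-1/2 : ℝ))).exp

private lemma hasFDerivAt_Zf (x x' : Fin N → Fin n → ℝ) (i : Fin N)
    (W : Matrix (Fin m) (Fin n) ℝ) :
    HasFDerivAt (fun V => Zf x x' i V)
      ((∑ j ∈ univ.erase i, Ee (x i - x j) W • ((-1/2 : ℝ) • dq (x i - x j) W)) +
        Ee (x i - x' i) W • ((-1/2 : ℝ) • dq (x i - x' i) W)) W :=
  (HasFDerivAt.fun_sum fun j _ => hasFDerivAt_Ee (x i - x j) W).add (hasFDerivAt_Ee (x i - x' i) W)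

private lemma hasFDerivAt_Lfun (x x' : Fin N → Fin n → ℝ) (W : Matrix (Fin m) (Fin n) ℝ) :
    HasFDerivAt (fun V => ∑ i, ((1/2 : ℝ) * ∑ a, ((V *ᵥ (x i - x' i)) a) ^ 2 +
        Real.log (Zf x x' i V))) (Dmap x x' W) W := by
  refine HasFDerivAt.fun_sum fun i _ => HasFDerivAt.add ?_ ?_
  · exact (hasFDerivAt_q (x i - x' i) W).const_mul _
  · exact (hasFDerivAt_Zf x x' i W).log (Zf_pos x x' i W).ne'

private lemma psd_smul_vecMulVec {c : ℝ} (hc : 0 ≤ c) (u : Fin n → ℝ) :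
    (c • Matrix.vecMulVec u u).PosSemidef := by
  refine Matrix.PosSemidef.of_dotProduct_mulVec_nonneg ?_ ?_
  · ext i j
    simp [Matrix.conjTranspose_apply, Matrix.vecMulVec_apply, mul_comm]
  · intro v
    have : star v ⬝ᵥ ((c • Matrix.vecMulVec u u) *ᵥ v) = c * (∑ a, u a * v a) ^ 2 := by
      simp [dotProduct, Matrix.mulVec, Matrix.vecMulVec_apply, Finset.mul_sum,
        Finset.sum_mul, sq]
      exact Finset.sum_congr rfl fun a _ => Finset.sum_congr rfl fun b _ => by ring
    rw [this]
    positivity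

private lemma psd_sum {ι : Type*} (s : Finset ι) (f : ι → Matrix (Fin n) (Fin n) ℝ)
    (h : ∀ i ∈ s, (f i).PosSemidef) : (∑ i ∈ s, f i).PosSemidef := by
  classical
  induction s using Finset.cons_induction with
  | empty => simpa using Matrix.PosSemidef.zero
  | cons a s ha ih =>
    rw [Finset.sum_cons]
    exact ((h a (Finset.mem_cons_self a s)).add
      (ih fun i hi => h i (Finset.mem_cons_of_mem hi)))

private lemma swap_erase_sum (f : Fin N → Fin N → ℝ) :
    ∑ i, ∑ j ∈ univ.erase i, f i j = ∑ i, ∑ j ∈ univ.erase i, f j i := by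
  simp only [Finset.sum_erase_eq_sub (Finset.mem_univ _), Finset.sum_sub_distrib]
  rw [Finset.sum_comm]

end InfoNCEAux

/-- **Gradient of the InfoNCE loss of a single-layer linear model.**
With embeddings `z_i(W) = W x_i`, `z_i'(W) = W x_i'` (squared Euclidean norms
written as sums of squares), InfoNCE loss
`L W = −∑ i log (exp(−‖z_i−z_i'‖²/2) / Z_i)`, and softmax weights `α`, the
loss `L` is differentiable and its Frobenius gradient satisfies
`∇L(W) = −W (Σ̂₀(W) − Σ̂₁(W))`, i.e. `fderiv ℝ L W H = tr((−W(Σ̂₀−Σ̂₁))ᵀ H)`,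
where `Σ̂₀` (weighted data covariance) and `Σ̂₁` (weighted augmentation
covariance) are positive semidefinite.  In particular the gradient flow
`Ẇ = −∇L(W)` takes the form `Ẇ = W X(W)` with `X = Σ̂₀ − Σ̂₁` a difference of
two PSD matrices. -/
theorem infoNCE_single_layer_gradient (N m n : ℕ) (hN : 2 ≤ N)
    (x x' : Fin N → Fin n → ℝ)
    (z z' : Matrix (Fin m) (Fin n) ℝ → Fin N → Fin m → ℝ)
    (hz : ∀ W i, z W i = W *ᵥ x i) (hz' : ∀ W i, z' W i = W *ᵥ x' i)
    (Z : Matrix (Fin m) (Fin n) ℝ → Fin N → ℝ)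
    (hZ : ∀ W i, Z W i =
      (∑ j ∈ univ.erase i, Real.exp (-(∑ a, (z W i a - z W j a) ^ 2) / 2)) +
        Real.exp (-(∑ a, (z W i a - z' W i a) ^ 2) / 2))
    (L : Matrix (Fin m) (Fin n) ℝ → ℝ)
    (hL : L = fun W => -∑ i, Real.log
      (Real.exp (-(∑ a, (z W i a - z' W i a) ^ 2) / 2) / Z W i))
    (α : Matrix (Fin m) (Fin n) ℝ → Fin N → Fin N → ℝ)
    (hα : ∀ W i j, α W i j =
      if j = i then Real.exp (-(∑ a, (z W i a - z' W i a) ^ 2) / 2) / Z W i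
      else Real.exp (-(∑ a, (z W i a - z W j a) ^ 2) / 2) / Z W i)
    (S0 S1 : Matrix (Fin m) (Fin n) ℝ → Matrix (Fin n) (Fin n) ℝ)
    (hS0 : ∀ W, S0 W =
      ∑ i, ∑ j ∈ univ.erase i, α W j i • vecMulVec (x i - x j) (x i - x j))
    (hS1 : ∀ W, S1 W =
      ∑ i, (1 - α W i i) • vecMulVec (x' i - x i) (x' i - x i)) :
    Differentiable ℝ L ∧
    (∀ W, (S0 W).PosSemidef ∧ (S1 W).PosSemidef) ∧
    (∀ W H, fderiv ℝ L W H =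
      Matrix.trace ((-(W * (S0 W - S1 W)))ᵀ * H)) := by
  -- basic rewrites
  have hdiff : ∀ (V : Matrix (Fin m) (Fin n) ℝ) i j a,
      z V i a - z V j a = (V *ᵥ (x i - x j)) a := by
    intro V i j a
    simp [hz, Matrix.mulVec, dotProduct, mul_sub, Finset.sum_sub_distrib]
  have hdiff' : ∀ (V : Matrix (Fin m) (Fin n) ℝ) i a,
      z V i a - z' V i a = (V *ᵥ (x i - x' i)) a := by
    intro V i a
    simp [hz, hz', Matrix.mulVec, dotProduct, mul_sub, Finset.sum_sub_distrib]
  have hqeq : ∀ (V : Matrix (Fin m) (Fin n) ℝ) i j,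
      (∑ a, (z V i a - z V j a) ^ 2) = ∑ a, ((V *ᵥ (x i - x j)) a) ^ 2 :=
    fun V i j => Finset.sum_congr rfl fun a _ => by rw [hdiff]
  have hqeq' : ∀ (V : Matrix (Fin m) (Fin n) ℝ) i,
      (∑ a, (z V i a - z' V i a) ^ 2) = ∑ a, ((V *ᵥ (x i - x' i)) a) ^ 2 :=
    fun V i => Finset.sum_congr rfl fun a _ => by rw [hdiff']
  have hEe : ∀ (V : Matrix (Fin m) (Fin n) ℝ) i j,
      Real.exp (-(∑ a, (z V i a - z V j a) ^ 2) / 2) = Ee (x i - x j) V := by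
    intro V i j
    rw [hqeq V i j]; unfold Ee; exact congrArg Real.exp (by ring)
  have hEe' : ∀ (V : Matrix (Fin m) (Fin n) ℝ) i,
      Real.exp (-(∑ a, (z V i a - z' V i a) ^ 2) / 2) = Ee (x i - x' i) V := by
    intro V i
    rw [hqeq' V i]; unfold Ee; exact congrArg Real.exp (by ring)
  have hZeq : ∀ (V : Matrix (Fin m) (Fin n) ℝ) i, Z V i = Zf x x' i V := by
    intro V i
    rw [hZ]; unfold Zf
    exact congrArg₂ (· + ·) (Finset.sum_congr rfl fun j _ => hEe V i j) (hEe' V i)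
  have hZpos : ∀ (V : Matrix (Fin m) (Fin n) ℝ) i, 0 < Z V i := by
    intro V i; rw [hZeq]; exact Zf_pos x x' i V
  have hLeq : L = fun V => ∑ i, ((1/2 : ℝ) * ∑ a, ((V *ᵥ (x i - x' i)) a) ^ 2 +
      Real.log (Zf x x' i V)) := by
    rw [hL]; funext V
    have hterm : ∀ i : Fin N, Real.log
        (Real.exp (-(∑ a, (z V i a - z' V i a) ^ 2) / 2) / Z V i)
        = -((1/2 : ℝ) * ∑ a, ((V *ᵥ (x i - x' i)) a) ^ 2 + Real.log (Zf x x' i V)) := by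
      intro i
      rw [Real.log_div (Real.exp_ne_zero _) (hZpos V i).ne', Real.log_exp, hqeq' V i,
        hZeq V i]
      ring
    rw [Finset.sum_congr rfl fun i _ => hterm i, Finset.sum_neg_distrib, neg_neg]
  have key : ∀ V, HasFDerivAt L (Dmap x x' V) V := by
    intro V; rw [hLeq]; exact hasFDerivAt_Lfun x x' V
  -- alpha values
  have hαoff : ∀ (V : Matrix (Fin m) (Fin n) ℝ) i j, j ≠ i →
      α V i j = Ee (x i - x j) V / Zf x x' i V := by
    intro V i j hji
    rw [hα, if_neg hji, hEe V i j, hZeq V i]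
  have hαdiag : ∀ (V : Matrix (Fin m) (Fin n) ℝ) i,
      α V i i = Ee (x i - x' i) V / Zf x x' i V := by
    intro V i
    rw [hα, if_pos rfl, hEe' V i, hZeq V i]
  have hαoff_nonneg : ∀ (V : Matrix (Fin m) (Fin n) ℝ) i j, j ≠ i → 0 ≤ α V i j := by
    intro V i j hji
    rw [hαoff V i j hji]
    exact div_nonneg (Real.exp_pos _).le (Zf_pos x x' i V).le
  have hαdiag_le : ∀ (V : Matrix (Fin m) (Fin n) ℝ) i, α V i i ≤ 1 := by
    intro V i
    rw [hαdiag V i]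
    refine div_le_one_of_le₀ ?_ (Zf_pos x x' i V).le
    unfold Zf
    exact le_add_of_nonneg_left (Finset.sum_nonneg fun _ _ => (Real.exp_pos _).le)
  refine ⟨fun V => (key V).differentiableAt, ?_, ?_⟩
  · intro V
    constructor
    · rw [hS0]
      refine psd_sum _ _ fun i _ => psd_sum _ _ fun j hj => ?_
      exact psd_smul_vecMulVec
        (hαoff_nonneg V j i (Finset.ne_of_mem_erase hj).symm) _
    · rw [hS1]
      refine psd_sum _ _ fun i _ => psd_smul_vecMulVec ?_ _
      exact sub_nonneg.2 (hαdiag_le V i)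
  · intro W H
    rw [(key W).fderiv]
    have tflip : ∀ u v : Fin n → ℝ,
        (∑ a, (W *ᵥ (u - v)) a * (H *ᵥ (u - v)) a)
          = ∑ a, (W *ᵥ (v - u)) a * (H *ᵥ (v - u)) a := by
      intro u v
      refine Finset.sum_congr rfl fun a _ => ?_
      have h1 : (W *ᵥ (u - v)) a = -((W *ᵥ (v - u)) a) := by
        simp [Matrix.mulVec, dotProduct, mul_sub, Finset.sum_sub_distrib]
      have h2 : (H *ᵥ (u - v)) a = -((H *ᵥ (v - u)) a) := by
        simp [Matrix.mulVec, dotProduct, mul_sub, Finset.sum_sub_distrib]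
      rw [h1, h2, neg_mul_neg]
    have hDval : Dmap x x' W H = (∑ i, (1 - Ee (x i - x' i) W / Zf x x' i W) *
          (∑ a, (W *ᵥ (x i - x' i)) a * (H *ᵥ (x i - x' i)) a)) -
        ∑ i, ∑ j ∈ univ.erase i, (Ee (x i - x j) W / Zf x x' i W) *
          (∑ a, (W *ᵥ (x i - x j)) a * (H *ᵥ (x i - x j)) a) := by
      rw [← Finset.sum_sub_distrib]
      unfold Dmap
      simp only [ContinuousLinearMap.sum_apply, ContinuousLinearMap.add_apply,
        ContinuousLinearMap.smul_apply, smul_eq_mul, dq_apply]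
      refine Finset.sum_congr rfl fun i _ => ?_
      rw [mul_add ((Zf x x' i W)⁻¹)]
      have h1 : (Zf x x' i W)⁻¹ * ∑ j ∈ univ.erase i,
            (Ee (x i - x j) W * (-1/2 * (2 * ∑ a, (W *ᵥ (x i - x j)) a * (H *ᵥ (x i - x j)) a)))
          = -∑ j ∈ univ.erase i, (Ee (x i - x j) W / Zf x x' i W) *
            (∑ a, (W *ᵥ (x i - x j)) a * (H *ᵥ (x i - x j)) a) := by
        rw [Finset.mul_sum, ← Finset.sum_neg_distrib]
        exact Finset.sum_congr rfl fun j _ => by ring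
      rw [h1]; ring
    have hRHS : Matrix.trace ((-(W * (S0 W - S1 W)))ᵀ * H)
        = (∑ i, (1 - α W i i) * (∑ a, (W *ᵥ (x' i - x i)) a * (H *ᵥ (x' i - x i)) a)) -
          ∑ i, ∑ j ∈ univ.erase i, α W j i *
            (∑ a, (W *ᵥ (x i - x j)) a * (H *ᵥ (x i - x j)) a) := by
      rw [hS0, hS1]
      simp only [Matrix.mul_sub, Matrix.transpose_sub, Matrix.sub_mul, Matrix.trace_sub,
        Matrix.transpose_neg, Matrix.neg_mul, Matrix.trace_neg, Matrix.mul_sum,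
        Matrix.transpose_sum, Matrix.sum_mul, Matrix.trace_sum, Matrix.mul_smul,
        Matrix.transpose_smul, Matrix.smul_mul, Matrix.trace_smul, smul_eq_mul,
        trace_vecMulVec', neg_sub]
    have hswap : ∑ i, ∑ j ∈ univ.erase i, α W j i *
          (∑ a, (W *ᵥ (x i - x j)) a * (H *ᵥ (x i - x j)) a)
        = ∑ i, ∑ j ∈ univ.erase i, (Ee (x i - x j) W / Zf x x' i W) *
          (∑ a, (W *ᵥ (x i - x j)) a * (H *ᵥ (x i - x j)) a) := by
      rw [swap_erase_sum (fun i j => α W j i *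
          (∑ a, (W *ᵥ (x i - x j)) a * (H *ᵥ (x i - x j)) a))]
      refine Finset.sum_congr rfl fun i _ => Finset.sum_congr rfl fun j hj => ?_
      rw [hαoff W i j (Finset.ne_of_mem_erase hj), tflip (x j) (x i)]
    have hS1t : ∑ i, (1 - α W i i) * (∑ a, (W *ᵥ (x' i - x i)) a * (H *ᵥ (x' i - x i)) a)
        = ∑ i, (1 - Ee (x i - x' i) W / Zf x x' i W) *
          (∑ a, (W *ᵥ (x i - x' i)) a * (H *ᵥ (x i - x' i)) a) := by
      refine Finset.sum_congr rfl fun i _ => ?_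
      rw [hαdiag W i, tflip (x' i) (x i)]
    rw [hDval, hRHS, hswap, hS1t]
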